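/- Fix a critical value c and p ∈ (0, 1). If the observed value x satisfies x > c and x < Φ⁻¹((1 − Φ(c))·p + Φ(c)), then any θ ∈ ℝ with F(x; θ, c) = p satisfies θ < 0. (In particular, the conditional quantile is negative even though the observed t-statistic is significantly positive.) -/

import Mathlib

open Filter Set

/-- The standard normal CDF `Φ(t) = (2π)^{−1/2} ∫_{−∞}^t exp(−s²/2) ds`. -/
noncomputable def Phi (t : ℝ) : ℝ :=
  (Real.sqrt (2 * Real.pi))⁻¹ * ∫ s in Set.Iic t, Real.exp (-(s ^ 2) / 2)

/-- The truncated-normal distribution function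
    `F(a; θ, c) := (Φ(a − θ) − Φ(c − θ)) / (1 − Φ(c − θ))`. -/
noncomputable def F (a θ c : ℝ) : ℝ :=
  (Phi (a - θ) - Phi (c - θ)) / (1 - Phi (c - θ))

/-- The inverse of the standard normal CDF on `(0,1)`. -/
noncomputable def PhiInv : ℝ → ℝ := Function.invFun Phi

section Aux
open MeasureTheory Real

noncomputable def gf (s : ℝ) : ℝ := Real.exp (-(s ^ 2) / 2)

lemma gf_pos (s : ℝ) : 0 < gf s := Real.exp_pos _

lemma gf_cont : Continuous gf := by
  unfold gf; continuity

lemma gf_integrable : Integrable gf := by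
  have h := integrable_exp_neg_mul_sq (by norm_num : (0:ℝ) < 1/2)
  convert h using 2 with s
  unfold gf; ring_nf

lemma gf_integral : ∫ s, gf s = Real.sqrt (2 * Real.pi) := by
  have h := integral_gaussian (1/2)
  have : ∀ s:ℝ, gf s = Real.exp (-(1/2) * s^2) := by intro s; unfold gf; ring_nf
  simp only [this, h]
  rw [div_div_eq_mul_div, div_one]
  ring_nf

lemma J_sub (a b : ℝ) : (∫ s in Iic b, gf s) - ∫ s in Iic a, gf s = ∫ s in a..b, gf s :=
  intervalIntegral.integral_Iic_sub_Iic gf_integrable.integrableOn gf_integrable.integrableOn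

lemma intervalIntegral_gf_pos {a b : ℝ} (h : a < b) : 0 < ∫ s in a..b, gf s :=
  intervalIntegral.intervalIntegral_pos_of_pos (gf_cont.intervalIntegrable a b) (fun s => gf_pos s) h

lemma J_strictMono : StrictMono (fun t => ∫ s in Iic t, gf s) := by
  intro a b hab
  have := intervalIntegral_gf_pos hab
  have h2 := J_sub a b
  simp only at *
  linarith

lemma J_tendsto_atTop : Tendsto (fun t => ∫ s in Iic t, gf s) atTop (nhds (Real.sqrt (2 * Real.pi))) := by
  have h := tendsto_setIntegral_of_monotone (μ := volume) (f := gf) (s := fun t : ℝ => Iic t)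
    (fun i => measurableSet_Iic) (fun a b hab => Iic_subset_Iic.2 hab) ?_
  · have hU : (⋃ t : ℝ, Iic t) = univ := by
      ext s; simp only [mem_iUnion, mem_Iic, mem_univ, iff_true]; exact ⟨s, le_rfl⟩
    rw [hU] at h
    simpa [gf_integral] using h
  · exact gf_integrable.integrableOn
lemma J_tendsto_atBot : Tendsto (fun t => ∫ s in Iic t, gf s) atBot (nhds 0) := by
  have h := tendsto_setIntegral_of_antitone (μ := volume) (f := gf) (s := fun t : ℝ => Iic (-t))
    (fun i => measurableSet_Iic) (fun a b hab => Iic_subset_Iic.2 (by linarith)) ⟨0, gf_integrable.integrableOn⟩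
  have hI : (⋂ t : ℝ, Iic (-t)) = ∅ := by
    ext s; simp only [mem_iInter, mem_Iic, mem_empty_iff_false, iff_false, not_forall, not_le]
    exact ⟨-s + 1, by linarith⟩
  rw [hI] at h
  simp only [setIntegral_empty] at h
  have : Tendsto (fun t : ℝ => -t) atBot atTop := tendsto_neg_atBot_atTop
  have h2 := h.comp this
  refine h2.congr fun t => ?_
  simp

lemma J_nonneg (t : ℝ) : 0 ≤ ∫ s in Iic t, gf s :=
  setIntegral_nonneg measurableSet_Iic (fun s _ => (gf_pos s).le)

lemma sqrt2pi_pos : 0 < Real.sqrt (2 * Real.pi) :=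
  Real.sqrt_pos.2 (by positivity)

lemma J_lt (a b : ℝ) (h : a < b) : (∫ s in Iic a, gf s) < ∫ s in Iic b, gf s := J_strictMono h

lemma J_pos (t : ℝ) : 0 < ∫ s in Iic t, gf s := by
  have h := J_lt (t-1) t (by linarith)
  have := J_nonneg (t-1)
  linarith

lemma J_lt_top (t : ℝ) : (∫ s in Iic t, gf s) < Real.sqrt (2 * Real.pi) := by
  -- since J is strictly mono and tends to sqrt(2π) at top
  have h1 := J_lt t (t+1) (by linarith)
  have h2 : (∫ s in Iic (t+1), gf s) ≤ Real.sqrt (2 * Real.pi) :=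
    Monotone.ge_of_tendsto J_strictMono.monotone J_tendsto_atTop (t+1)
  linarith

lemma Phi_eq (t : ℝ) : Phi t = (Real.sqrt (2 * Real.pi))⁻¹ * ∫ s in Iic t, gf s := rfl

lemma Phi_pos (t : ℝ) : 0 < Phi t := by
  rw [Phi_eq]; exact mul_pos (inv_pos.2 sqrt2pi_pos) (J_pos t)

lemma Phi_lt_one (t : ℝ) : Phi t < 1 := by
  rw [Phi_eq]
  rw [inv_mul_lt_iff₀ sqrt2pi_pos, mul_one]
  exact J_lt_top t

lemma Phi_strictMono : StrictMono Phi := by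
  intro a b hab
  rw [Phi_eq, Phi_eq]
  exact mul_lt_mul_of_pos_left (J_strictMono hab) (inv_pos.2 sqrt2pi_pos)
lemma Phi_hasDerivAt (t : ℝ) :
    HasDerivAt Phi ((Real.sqrt (2 * Real.pi))⁻¹ * gf t) t := by
  have key : ∀ u : ℝ, Phi u = (Real.sqrt (2 * Real.pi))⁻¹ *
      ((∫ s in Iic (0:ℝ), gf s) + ∫ s in (0:ℝ)..u, gf s) := by
    intro u
    rw [Phi_eq]
    congr 1
    have := J_sub 0 u
    linarith
  have hd : HasDerivAt (fun u => ∫ s in (0:ℝ)..u, gf s) (gf t) t :=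
    (gf_cont.integral_hasStrictDerivAt 0 t).hasDerivAt
  have := ((hd.const_add (∫ s in Iic (0:ℝ), gf s)).const_mul ((Real.sqrt (2 * Real.pi))⁻¹))
  refine HasDerivAt.congr_deriv (this.congr_of_eventuallyEq ?_) rfl
  filter_upwards with u
  rw [key u]

lemma Phi_continuous : Continuous Phi := by
  have : Differentiable ℝ Phi := fun t => (Phi_hasDerivAt t).differentiableAt
  exact this.continuous

lemma Phi_tendsto_atTop : Tendsto Phi atTop (nhds 1) := by
  have := J_tendsto_atTop.const_mul ((Real.sqrt (2 * Real.pi))⁻¹)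
  simp only [inv_mul_cancel₀ sqrt2pi_pos.ne'] at this
  exact this

lemma Phi_tendsto_atBot : Tendsto Phi atBot (nhds 0) := by
  have h := J_tendsto_atBot.const_mul ((Real.sqrt (2 * Real.pi))⁻¹)
  rw [mul_zero] at h
  exact h

lemma Phi_surj {y : ℝ} (hy : 0 < y) (hy1 : y < 1) : ∃ a, Phi a = y := by
  obtain ⟨b, hb⟩ := (Phi_tendsto_atTop.eventually (eventually_gt_nhds hy1)).exists
  obtain ⟨a, ha⟩ := (Phi_tendsto_atBot.eventually (eventually_lt_nhds hy)).exists
  have hab : a ≤ b := by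
    by_contra h
    exact absurd (Phi_strictMono (not_le.1 h)) (by linarith [hb, ha])
  obtain ⟨z, _, hz⟩ := intermediate_value_Icc hab Phi_continuous.continuousOn
    (⟨ha.le, hb.le⟩ : y ∈ Icc (Phi a) (Phi b))
  exact ⟨z, hz⟩
noncomputable def Q (t : ℝ) : ℝ := ∫ s in Ici t, gf s

lemma Q_eq (t : ℝ) : Q t = Real.sqrt (2 * Real.pi) - ∫ s in Iic t, gf s := by
  have h : (∫ s in Iic t, gf s) + ∫ s in Ioi t, gf s = ∫ s, gf s :=
    intervalIntegral.integral_Iic_add_Ioi gf_integrable.integrableOn gf_integrable.integrableOn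
  have h2 : (∫ s in Ioi t, gf s) = Q t := by
    unfold Q
    exact (setIntegral_congr_set Ioi_ae_eq_Ici)
  rw [gf_integral] at h
  linarith

lemma one_sub_Phi (t : ℝ) : 1 - Phi t = (Real.sqrt (2 * Real.pi))⁻¹ * Q t := by
  rw [Q_eq, Phi_eq, mul_sub, inv_mul_cancel₀ sqrt2pi_pos.ne']

lemma Q_pos (t : ℝ) : 0 < Q t := by
  rw [Q_eq]; linarith [J_lt_top t]

lemma one_sub_Phi_pos (t : ℝ) : 0 < 1 - Phi t := by linarith [Phi_lt_one t]

-- translation for Ici set integrals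
lemma integral_Ici_comp_sub (g : ℝ → ℝ) (b d : ℝ) :
    (∫ s in Ici b, g (s - d)) = ∫ u in Ici (b - d), g u := by
  have h1 : (∫ s in Ici b, g (s - d)) = ∫ s, (Ici (b-d)).indicator g (s - d) := by
    rw [← integral_indicator measurableSet_Ici]
    congr 1
    ext s
    by_cases hs : s ∈ Ici b
    · rw [indicator_of_mem hs]
      have : s - d ∈ Ici (b - d) := by simp at hs ⊢; linarith
      rw [indicator_of_mem this]
    · rw [indicator_of_notMem hs]
      have : s - d ∉ Ici (b - d) := by simp at hs ⊢; linarith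
      rw [indicator_of_notMem this]
  rw [h1, integral_sub_right_eq_self ((Ici (b-d)).indicator g) d,
    integral_indicator measurableSet_Ici]

lemma hazard_mono {a b : ℝ} (hab : a ≤ b) : gf a * Q b ≤ gf b * Q a := by
  have key : ∀ s ∈ Ici b, gf a * gf s ≤ gf b * gf (s - (b - a)) := by
    intro s hs
    simp only [mem_Ici] at hs
    unfold gf
    rw [← Real.exp_add, ← Real.exp_add]
    apply Real.exp_le_exp.2
    nlinarith [sq_nonneg (s - b)]
  have h1 : gf a * Q b = ∫ s in Ici b, gf a * gf s := by
    unfold Q; rw [MeasureTheory.integral_const_mul]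
  have h2 : gf b * Q a = ∫ s in Ici b, gf b * gf (s - (b - a)) := by
    have := integral_Ici_comp_sub (fun u => gf b * gf u) b (b - a)
    simp only [sub_sub_cancel] at this
    unfold Q
    rw [← MeasureTheory.integral_const_mul, ← this]
  rw [h1, h2]
  apply setIntegral_mono_on
  · exact (gf_integrable.integrableOn.const_mul _)
  · have : Integrable (fun s => gf b * gf (s - (b - a))) := by
      have := (gf_integrable.comp_sub_right (b - a)).const_mul (gf b)
      exact this
    exact this.integrableOn
  · exact measurableSet_Ici
  · exact key
lemma hfun_mono (c x : ℝ) (hcx : c ≤ x) :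
    Monotone (fun θ => (1 - Phi (x - θ)) / (1 - Phi (c - θ))) := by
  set C : ℝ := (Real.sqrt (2 * Real.pi))⁻¹ with hC
  have hD : ∀ θ : ℝ, HasDerivAt (fun θ => (1 - Phi (x - θ)) / (1 - Phi (c - θ)))
      ((C * gf (x - θ) * (1 - Phi (c - θ)) - (1 - Phi (x - θ)) * (C * gf (c - θ)))
        / (1 - Phi (c - θ)) ^ 2) θ := by
    intro θ
    have hN : HasDerivAt (fun θ => 1 - Phi (x - θ)) (C * gf (x - θ)) θ := by
      have h1 : HasDerivAt (fun θ : ℝ => x - θ) (-1) θ := by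
        simpa using (hasDerivAt_id θ).const_sub x
      have h2 := (Phi_hasDerivAt (x - θ)).comp θ h1
      have h3 := h2.const_sub 1
      refine h3.congr_deriv ?_
      rw [hC]; ring
    have hDen : HasDerivAt (fun θ => 1 - Phi (c - θ)) (C * gf (c - θ)) θ := by
      have h1 : HasDerivAt (fun θ : ℝ => c - θ) (-1) θ := by
        simpa using (hasDerivAt_id θ).const_sub c
      have h2 := (Phi_hasDerivAt (c - θ)).comp θ h1
      have h3 := h2.const_sub 1
      refine h3.congr_deriv ?_
      rw [hC]; ring
    exact hN.div hDen (one_sub_Phi_pos (c - θ)).ne'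
  apply monotone_of_deriv_nonneg
  · exact fun θ => (hD θ).differentiableAt
  · intro θ
    rw [(hD θ).deriv]
    apply div_nonneg _ (sq_nonneg _)
    rw [one_sub_Phi, one_sub_Phi]
    have hz := hazard_mono (a := c - θ) (b := x - θ) (by linarith)
    have hC0 : 0 ≤ C := (inv_pos.2 sqrt2pi_pos).le
    nlinarith [sq_nonneg C]

end Aux

open MeasureTheory Real in
/-- Fix `c` and `p ∈ (0,1)`. If `x > c` and `x < Φ⁻¹((1 − Φ(c))·p + Φ(c))`, then
any `θ` with `F(x; θ, c) = p` satisfies `θ < 0`. -/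

theorem stmt_10 (c p x θ : ℝ) (hp : p ∈ Set.Ioo (0 : ℝ) 1)
    (hx₁ : c < x) (hx₂ : x < PhiInv ((1 - Phi c) * p + Phi c))
    (hθ : F x θ c = p) : θ < 0 := by
  obtain ⟨hp0, hp1⟩ := hp
  set y : ℝ := (1 - Phi c) * p + Phi c with hy
  have hc1 := Phi_lt_one c
  have hc0 := Phi_pos c
  have hy0 : 0 < y := by nlinarith
  have hy1 : y < 1 := by nlinarith
  have hPy : Phi (PhiInv y) = y := Function.invFun_eq (Phi_surj hy0 hy1)
  have hxy : Phi x < y := by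
    have := Phi_strictMono hx₂
    rwa [hPy] at this
  -- F x 0 c < p
  have hF0 : F x 0 c < p := by
    unfold F
    rw [sub_zero, sub_zero, div_lt_iff₀ (one_sub_Phi_pos c)]
    nlinarith
  by_contra hθ0
  push_neg at hθ0
  have hmono := hfun_mono c x hx₁.le hθ0
  have hFθ : F x θ c = 1 - (1 - Phi (x - θ)) / (1 - Phi (c - θ)) := by
    unfold F
    rw [eq_sub_iff_add_eq, ← add_div, div_eq_one_iff_eq (one_sub_Phi_pos (c - θ)).ne']
    ring
  have hF0' : F x 0 c = 1 - (1 - Phi (x - 0)) / (1 - Phi (c - 0)) := by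
    unfold F
    rw [sub_zero, sub_zero, eq_sub_iff_add_eq, ← add_div,
      div_eq_one_iff_eq (one_sub_Phi_pos c).ne']
    ring
  rw [hFθ] at hθ
  rw [hF0'] at hF0
  linarith
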